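/- For every real c₁ ≥ 0 there exists a real c₂ ≥ 0 such that for all reals x₁, x₂, x₀ > 0: c₂·(x₁ + x₂ + 2x₀)·ln(x₁ + x₂ + 2x₀) + x₁·ln(x₁) + x₂·ln(x₂) + 2x₀·ln(x₀) ≥ (x₁ + x₂ + 2x₀)·ln(x₁ + x₂ + 2x₀) + c₂·(x₁ + x₀)·ln(x₁ + x₀) + c₂·(x₂ + x₀)·ln(x₂ + x₀) + c₁·x₀. -/

import Mathlib

open Real

/-- `log x ≥ 1 - 1/x` for `x > 0`. -/
private lemma log_ge_one_sub_inv {x : ℝ} (hx : 0 < x) : 1 - 1 / x ≤ Real.log x := by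
  simpa [one_div] using Real.one_sub_inv_le_log_of_pos hx

/-- `u * (log (u+v) - log u) ≤ v` for positive `u, v`. -/
private lemma mul_log_ratio_le {u v : ℝ} (hu : 0 < u) (hv : 0 < v) :
    u * (Real.log (u + v) - Real.log u) ≤ v := by
  have huv : 0 < (u + v) / u := by positivity
  have h := Real.log_le_sub_one_of_pos huv
  rw [Real.log_div (by positivity) (ne_of_gt hu)] at h
  have : Real.log (u + v) - Real.log u ≤ v / u := by
    have : (u + v) / u - 1 = v / u := by field_simp; ring
    linarith [h, this.symm.le]
  calc u * (Real.log (u + v) - Real.log u) ≤ u * (v / u) :=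
        mul_le_mul_of_nonneg_left this hu.le
    _ = v := by field_simp

/-- `x₀ * (log a - log x₀) ≤ 2 a` for `0 < x₀ ≤ a`. -/
private lemma mul_log_le_two_mul {x₀ a : ℝ} (h0 : 0 < x₀) (hxa : x₀ ≤ a) :
    x₀ * (Real.log a - Real.log x₀) ≤ 2 * a := by
  have ha : 0 < a := lt_of_lt_of_le h0 hxa
  have hd : 0 < a / x₀ := by positivity
  have e1 : Real.log a - Real.log x₀ = Real.log (a / x₀) :=
    (Real.log_div (ne_of_gt ha) (ne_of_gt h0)).symm
  have e2 : Real.log (a / x₀) = 2 * Real.log (Real.sqrt (a / x₀)) := by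
    rw [Real.log_sqrt hd.le]; ring
  have h3 : Real.log (Real.sqrt (a / x₀)) ≤ Real.sqrt (a / x₀) := by
    have := Real.log_le_sub_one_of_pos (Real.sqrt_pos.mpr hd)
    linarith
  have h4 : x₀ * Real.sqrt (a / x₀) = Real.sqrt (x₀ * a) := by
    rw [show x₀ * a = x₀ ^ 2 * (a / x₀) by field_simp,
      Real.sqrt_mul (by positivity), Real.sqrt_sq h0.le]
  have h5 : Real.sqrt (x₀ * a) ≤ a := by
    calc Real.sqrt (x₀ * a) ≤ Real.sqrt (a * a) :=
          Real.sqrt_le_sqrt (by nlinarith)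
      _ = a := Real.sqrt_mul_self ha.le
  calc x₀ * (Real.log a - Real.log x₀) = 2 * (x₀ * Real.log (Real.sqrt (a / x₀))) := by
        rw [e1, e2]; ring
    _ ≤ 2 * (x₀ * Real.sqrt (a / x₀)) := by
        have := mul_le_mul_of_nonneg_left h3 h0.le; linarith
    _ = 2 * Real.sqrt (x₀ * a) := by rw [h4]
    _ ≤ 2 * a := by linarith

private lemma aux (c₁ : ℝ) (hc₁ : 0 ≤ c₁) (x₁ x₂ x₀ : ℝ)
    (h1 : 0 < x₁) (h2 : 0 < x₂) (h0 : 0 < x₀) (hle : x₁ ≤ x₂) :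
    (c₁ + 10) * (x₁ + x₂ + 2 * x₀) * Real.log (x₁ + x₂ + 2 * x₀) +
        x₁ * Real.log x₁ + x₂ * Real.log x₂ + 2 * x₀ * Real.log x₀ ≥
      (x₁ + x₂ + 2 * x₀) * Real.log (x₁ + x₂ + 2 * x₀) +
        (c₁ + 10) * (x₁ + x₀) * Real.log (x₁ + x₀) +
        (c₁ + 10) * (x₂ + x₀) * Real.log (x₂ + x₀) + c₁ * x₀ := by
  set s : ℝ := x₁ + x₂ + 2 * x₀ with hs
  set a : ℝ := x₁ + x₀ with hadef
  set b : ℝ := x₂ + x₀ with hbdef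
  have ha : 0 < a := by positivity
  have hb : 0 < b := by positivity
  have hs0 : 0 < s := by positivity
  have hab : s = a + b := by rw [hs, hadef, hbdef]; ring
  have hba : a ≤ b := by rw [hadef, hbdef]; linarith
  have hx0a : x₀ ≤ a := by rw [hadef]; linarith
  have hx0b : x₀ ≤ b := by rw [hbdef]; linarith
  set T : ℝ := a * (Real.log s - Real.log a) with hT
  set U : ℝ := b * (Real.log s - Real.log b) with hU
  -- log monotonicity facts
  have hlsa : Real.log a ≤ Real.log s :=
    Real.log_le_log ha (by rw [hab]; linarith)
  have hlsb : Real.log b ≤ Real.log s :=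
    Real.log_le_log hb (by rw [hab]; linarith)
  have hT0 : 0 ≤ T := by
    have : 0 ≤ Real.log s - Real.log a := by linarith
    exact mul_nonneg ha.le this
  have hU0 : 0 ≤ U := by
    have : 0 ≤ Real.log s - Real.log b := by linarith
    exact mul_nonneg hb.le this
  -- T ≥ x₀ / 2 and U ≥ x₀ / 2
  have half : ∀ u : ℝ, 0 < u → x₀ ≤ u → u + x₀ ≤ s →
      x₀ / 2 ≤ u * (Real.log s - Real.log u) := by
    intro u hu hxu hus
    have h1' : Real.log (u + x₀) ≤ Real.log s := Real.log_le_log (by linarith) hus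
    have hq : 0 < (u + x₀) / u := by positivity
    have h2' := log_ge_one_sub_inv hq
    rw [Real.log_div (by positivity) (ne_of_gt hu)] at h2'
    have h3' : 1 - 1 / ((u + x₀) / u) = x₀ / (u + x₀) := by field_simp; ring
    have h4' : x₀ / (2 * u) ≤ x₀ / (u + x₀) := by
      apply div_le_div_of_nonneg_left h0.le (by linarith) (by linarith)
    have h5' : x₀ / (2 * u) ≤ Real.log (u + x₀) - Real.log u := by
      rw [h3'] at h2'; linarith
    have h6' : x₀ / (2 * u) ≤ Real.log s - Real.log u := by linarith
    calc x₀ / 2 = u * (x₀ / (2 * u)) := by field_simp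
      _ ≤ u * (Real.log s - Real.log u) := mul_le_mul_of_nonneg_left h6' hu.le
  have hTx : x₀ / 2 ≤ T := half a ha hx0a (by rw [hab]; linarith)
  have hUx : x₀ / 2 ≤ U := half b hb hx0b (by rw [hab]; linarith)
  -- T ≥ a * log 2 since s ≥ 2a
  have hTlog2 : a * Real.log 2 ≤ T := by
    have h2a : Real.log (2 * a) ≤ Real.log s :=
      Real.log_le_log (by positivity) (by rw [hab]; linarith)
    rw [Real.log_mul two_ne_zero (ne_of_gt ha)] at h2a
    have : Real.log 2 ≤ Real.log s - Real.log a := by linarith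
    exact mul_le_mul_of_nonneg_left this ha.le
  have haT : a ≤ (3 / 2) * T := by
    have hl2 : (2 : ℝ) / 3 ≤ Real.log 2 := by
      have := Real.log_two_gt_d9; linarith
    nlinarith
  -- entropy-split bounds
  have hE1 : x₁ * (Real.log a - Real.log x₁) ≤ x₀ := by
    have := mul_log_ratio_le h1 h0; rw [← hadef] at this; exact this
  have hE2 : x₂ * (Real.log b - Real.log x₂) ≤ x₀ := by
    have := mul_log_ratio_le h2 h0; rw [← hbdef] at this; exact this
  have hB1 : x₀ * (Real.log a - Real.log x₀) ≤ 2 * a := mul_log_le_two_mul h0 hx0a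
  have hB2 : x₀ * (Real.log b - Real.log x₀) ≤ 2 * a + T := by
    have hsplit : x₀ * (Real.log b - Real.log x₀) =
        x₀ * (Real.log a - Real.log x₀) + x₀ * (Real.log b - Real.log a) := by ring
    have h1' : x₀ * (Real.log b - Real.log a) ≤ x₀ * (Real.log s - Real.log a) :=
      mul_le_mul_of_nonneg_left (by linarith) h0.le
    have h2' : x₀ * (Real.log s - Real.log a) ≤ a * (Real.log s - Real.log a) :=
      mul_le_mul_of_nonneg_right hx0a (by linarith)
    rw [hT]
    linarith [hsplit, h1', h2']
  -- deficit decomposition (exact identity)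
  have hdecomp : s * Real.log s - x₁ * Real.log x₁ - x₂ * Real.log x₂ -
      2 * x₀ * Real.log x₀ =
      (T + U) + (x₁ * (Real.log a - Real.log x₁) + x₀ * (Real.log a - Real.log x₀)) +
      (x₂ * (Real.log b - Real.log x₂) + x₀ * (Real.log b - Real.log x₀)) := by
    rw [hT, hU, hab, hadef, hbdef]; ring
  -- combine: deficit ≤ 10 (T + U)
  have hx0TU : x₀ ≤ T + U := by linarith
  have hdef : s * Real.log s - x₁ * Real.log x₁ - x₂ * Real.log x₂ -
      2 * x₀ * Real.log x₀ ≤ 10 * (T + U) := by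
    linarith [hdecomp, hE1, hE2, hB1, hB2, haT, hx0TU, hU0]
  have hc1x : c₁ * x₀ ≤ c₁ * (T + U) := mul_le_mul_of_nonneg_left hx0TU hc₁
  have key : (c₁ + 10) * (T + U) ≥
      (s * Real.log s - x₁ * Real.log x₁ - x₂ * Real.log x₂ - 2 * x₀ * Real.log x₀)
        + c₁ * x₀ := by linarith [hdef, hc1x]
  have hTU : T + U = s * Real.log s - a * Real.log a - b * Real.log b := by
    rw [hT, hU, hab]; ring
  rw [hTU] at key
  linarith [key]

theorem xlogx_inequality (c₁ : ℝ) (hc₁ : 0 ≤ c₁) :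
    ∃ c₂ : ℝ, 0 ≤ c₂ ∧ ∀ x₁ x₂ x₀ : ℝ, 0 < x₁ → 0 < x₂ → 0 < x₀ →
      c₂ * (x₁ + x₂ + 2 * x₀) * Real.log (x₁ + x₂ + 2 * x₀) +
          x₁ * Real.log x₁ + x₂ * Real.log x₂ + 2 * x₀ * Real.log x₀ ≥
        (x₁ + x₂ + 2 * x₀) * Real.log (x₁ + x₂ + 2 * x₀) +
          c₂ * (x₁ + x₀) * Real.log (x₁ + x₀) +
          c₂ * (x₂ + x₀) * Real.log (x₂ + x₀) + c₁ * x₀ := by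
  refine ⟨c₁ + 10, by linarith, ?_⟩
  intro x₁ x₂ x₀ h1 h2 h0
  rcases le_total x₁ x₂ with h | h
  · exact aux c₁ hc₁ x₁ x₂ x₀ h1 h2 h0 h
  · have e : x₁ + x₂ + 2 * x₀ = x₂ + x₁ + 2 * x₀ := by ring
    rw [e]
    linarith [aux c₁ hc₁ x₂ x₁ x₀ h2 h1 h0 h]
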